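/- Let j ≥ 1 and k ≥ 1 be integers, let F : 𝔽₂ʲ → 𝔽₂ be a Boolean function, and let n ≥ 1 be such that n + j ≥ k. Regard F as a Boolean function of the first j of n + j variables. Then S(σ_{n+j,k} + F) = Σ_{l=0}^{n} ( Σ_{m=0}^{j} C_m(F) · (-1)^{C(l+m,k)} ) · C(n,l), where C(a,b) denotes the binomial coefficient. -/

import Mathlib

/-- Exponential sum of a Boolean function in `N` variables. -/
def expSum {N : ℕ} (G : (Fin N → ZMod 2) → ZMod 2) : ℤ :=
  ∑ x : Fin N → ZMod 2, (-1 : ℤ) ^ (G x).val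

/-- Elementary symmetric Boolean polynomial of degree `k` in `n` variables. -/
def sigma (n k : ℕ) (x : Fin n → ZMod 2) : ZMod 2 :=
  ∑ A ∈ Finset.powersetCard k (Finset.univ : Finset (Fin n)), ∏ i ∈ A, x i

/-- Hamming weight of a Boolean vector. -/
def wt {j : ℕ} (x : Fin j → ZMod 2) : ℕ :=
  (Finset.univ.filter (fun i => x i = 1)).card

/-- The weight-coefficients `C_m(F) = Σ_{wt(x)=m} (-1)^{F(x)}` of a Boolean function. -/
def coefC {j : ℕ} (F : (Fin j → ZMod 2) → ZMod 2) (m : ℕ) : ℤ :=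
  ∑ x ∈ Finset.univ.filter (fun x : Fin j → ZMod 2 => wt x = m), (-1 : ℤ) ^ (F x).val

lemma zmod2_sign_add (a b : ZMod 2) :
    (-1:ℤ)^((a+b).val) = (-1:ℤ)^a.val * (-1:ℤ)^b.val := by
  revert a b; decide

lemma zmod2_sign_natCast (c : ℕ) : (-1:ℤ)^(((c : ZMod 2)).val) = (-1:ℤ)^c := by
  rw [ZMod.val_natCast]
  conv_rhs => rw [← Nat.div_add_mod c 2]
  rw [pow_add, pow_mul, neg_one_sq, one_pow, one_mul]

lemma zmod2_ne_one {a : ZMod 2} (h : a ≠ 1) : a = 0 := by revert h; revert a; decide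

lemma sigma_eq (N k : ℕ) (x : Fin N → ZMod 2) :
    sigma N k x = ((wt x).choose k : ZMod 2) := by
  classical
  unfold sigma wt
  set S := Finset.univ.filter (fun i => x i = 1) with hS
  have hp : ∀ A ∈ Finset.powersetCard k (Finset.univ : Finset (Fin N)),
      ∏ i ∈ A, x i = if A ⊆ S then 1 else 0 := by
    intro A _
    by_cases h : A ⊆ S
    · rw [if_pos h]
      apply Finset.prod_eq_one
      intro i hi
      have := h hi
      rw [hS, Finset.mem_filter] at this
      exact this.2
    · rw [if_neg h]
      obtain ⟨i, hiA, hiS⟩ := Finset.not_subset.mp h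
      apply Finset.prod_eq_zero hiA
      apply zmod2_ne_one
      intro h1
      exact hiS (by rw [hS]; simp [h1])
  rw [Finset.sum_congr rfl hp, Finset.sum_boole]
  have : Finset.filter (fun A => A ⊆ S) (Finset.powersetCard k (Finset.univ : Finset (Fin N)))
      = Finset.powersetCard k S := by
    ext A
    simp [Finset.mem_powersetCard, and_comm, Finset.subset_univ]
  rw [this, Finset.card_powersetCard]

lemma card_wt_eq (n l : ℕ) :
    (Finset.univ.filter fun z : Fin n → ZMod 2 => wt z = l).card = n.choose l := by
  classical
  have h2 : ((Finset.univ : Finset (Fin n)).powersetCard l).card = n.choose l := by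
    rw [Finset.card_powersetCard, Finset.card_univ, Fintype.card_fin]
  rw [← h2]
  refine Finset.card_nbij' (fun z => Finset.univ.filter (fun i => z i = 1))
    (fun A => fun i => if i ∈ A then 1 else 0) ?_ ?_ ?_ ?_
  · intro z hz
    simp only [Finset.mem_coe, Finset.mem_filter, Finset.mem_univ, true_and] at hz
    simp only [Finset.mem_coe, Finset.mem_powersetCard]
    exact ⟨Finset.subset_univ _, hz⟩
  · intro A hA
    simp only [Finset.mem_coe, Finset.mem_powersetCard] at hA
    simp only [Finset.mem_coe, Finset.mem_filter, Finset.mem_univ, true_and]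
    unfold wt
    rw [← hA.2]
    congr 1
    ext i
    simp
  · intro z hz
    funext i
    by_cases h : z i = 1
    · simp [h]
    · simp [h, zmod2_ne_one h]
  · intro A hA
    ext i
    simp

lemma wt_le {N : ℕ} (x : Fin N → ZMod 2) : wt x ≤ N := by
  refine le_trans (Finset.card_filter_le _ _) ?_
  simp

def splitE (n j : ℕ) : ((Fin j → ZMod 2) × (Fin n → ZMod 2)) ≃ (Fin (n + j) → ZMod 2) :=
  (Equiv.sumArrowEquivProdArrow (Fin j) (Fin n) (ZMod 2)).symm.trans
    (Equiv.arrowCongr (finSumFinEquiv.trans (finCongr (Nat.add_comm j n))) (Equiv.refl _))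

lemma splitE_castLE (n j : ℕ) (y : Fin j → ZMod 2) (z : Fin n → ZMod 2) (i : Fin j) :
    splitE n j (y, z) (Fin.castLE (Nat.le_add_left j n) i) = y i := by
  simp only [splitE, Equiv.trans_apply, Equiv.arrowCongr_apply, Equiv.sumArrowEquivProdArrow,
    Equiv.coe_fn_symm_mk, Function.comp_apply, Equiv.refl_apply, Equiv.symm_trans_apply,
    finCongr_symm, finCongr_apply]
  have : finSumFinEquiv.symm (Fin.cast (Nat.add_comm n j) (Fin.castLE (Nat.le_add_left j n) i))
      = Sum.inl i := by
    have h1 : Fin.cast (Nat.add_comm n j) (Fin.castLE (Nat.le_add_left j n) i)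
        = Fin.castAdd n i := by
      apply Fin.ext; simp
    rw [h1, finSumFinEquiv_symm_apply_castAdd]
  rw [this]; rfl

lemma wt_splitE (n j : ℕ) (y : Fin j → ZMod 2) (z : Fin n → ZMod 2) :
    wt (splitE n j (y, z)) = wt y + wt z := by
  classical
  have hc : ∀ (N : ℕ) (x : Fin N → ZMod 2),
      wt x = ∑ i : Fin N, if x i = 1 then 1 else 0 := by
    intro N x
    rw [wt, Finset.card_filter]
  rw [hc, hc, hc]
  rw [← Equiv.sum_comp (finSumFinEquiv.trans (finCongr (Nat.add_comm j n)))
    (fun i => if splitE n j (y, z) i = 1 then 1 else 0)]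
  rw [Fintype.sum_sum_type]
  congr 1
  · apply Finset.sum_congr rfl
    intro i _
    congr 1
    simp [splitE, Equiv.sumArrowEquivProdArrow]
  · apply Finset.sum_congr rfl
    intro i _
    congr 1
    simp [splitE, Equiv.sumArrowEquivProdArrow]

lemma sum_by_weight (n : ℕ) (g : ℕ → ℤ) :
    ∑ z : Fin n → ZMod 2, g (wt z) = ∑ l ∈ Finset.range (n+1), (n.choose l : ℤ) * g l := by
  classical
  rw [← Finset.sum_fiberwise_of_maps_to (g := wt) (t := Finset.range (n+1))
    (fun z _ => Finset.mem_range.mpr (Nat.lt_succ_of_le (wt_le z))) (fun z => g (wt z))]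
  apply Finset.sum_congr rfl
  intro l _
  rw [Finset.sum_congr rfl (fun z hz => by rw [(Finset.mem_filter.mp hz).2]),
    Finset.sum_const, card_wt_eq, nsmul_eq_mul]

lemma sum_by_weight' (j : ℕ) (F : (Fin j → ZMod 2) → ZMod 2) (H : ℕ → ℤ) :
    ∑ y : Fin j → ZMod 2, H (wt y) * (-1:ℤ)^(F y).val
      = ∑ m ∈ Finset.range (j+1), H m * coefC F m := by
  classical
  rw [← Finset.sum_fiberwise_of_maps_to (g := wt) (t := Finset.range (j+1))
    (fun y _ => Finset.mem_range.mpr (Nat.lt_succ_of_le (wt_le y)))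
    (fun y => H (wt y) * (-1:ℤ)^(F y).val)]
  apply Finset.sum_congr rfl
  intro m _
  rw [coefC, Finset.mul_sum]
  apply Finset.sum_congr rfl
  intro y hy
  rw [(Finset.mem_filter.mp hy).2]

/-- `S(σ_{n+j,k} + F) = Σ_{l=0}^n (Σ_{m=0}^j C_m(F)(-1)^{C(l+m,k)}) C(n,l)`, where `F`
is a Boolean function of the first `j` of the `n + j` variables. -/
theorem exponential_sum_perturbation_formula
    (j k : ℕ) (hj : 1 ≤ j) (hk : 1 ≤ k)
    (F : (Fin j → ZMod 2) → ZMod 2)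
    (n : ℕ) (hn : 1 ≤ n) (hnk : k ≤ n + j) :
    expSum (fun x : Fin (n + j) → ZMod 2 =>
        sigma (n + j) k x + F (fun i => x (Fin.castLE (Nat.le_add_left j n) i))) =
      ∑ l ∈ Finset.range (n + 1),
        (∑ m ∈ Finset.range (j + 1), coefC F m * (-1 : ℤ) ^ Nat.choose (l + m) k) *
          (n.choose l : ℤ) := by
  classical
  have key : expSum (fun x : Fin (n + j) → ZMod 2 =>
        sigma (n + j) k x + F (fun i => x (Fin.castLE (Nat.le_add_left j n) i))) =
      ∑ y : Fin j → ZMod 2, ∑ z : Fin n → ZMod 2,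
        (-1:ℤ) ^ ((wt y + wt z).choose k) * (-1:ℤ) ^ (F y).val := by
    rw [expSum, ← Equiv.sum_comp (splitE n j), Fintype.sum_prod_type]
    apply Finset.sum_congr rfl; intro y _
    apply Finset.sum_congr rfl; intro z _
    have h1 : (fun i => splitE n j (y, z) (Fin.castLE (Nat.le_add_left j n) i)) = y := by
      funext i; exact splitE_castLE n j y z i
    rw [h1, sigma_eq, wt_splitE, zmod2_sign_add, zmod2_sign_natCast]
  rw [key]
  have step2 : ∀ y : Fin j → ZMod 2,
      ∑ z : Fin n → ZMod 2, (-1:ℤ) ^ ((wt y + wt z).choose k) * (-1:ℤ) ^ (F y).val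
        = (∑ l ∈ Finset.range (n+1), (n.choose l : ℤ) * (-1:ℤ) ^ ((wt y + l).choose k))
            * (-1:ℤ) ^ (F y).val := by
    intro y
    rw [← Finset.sum_mul]
    congr 1
    exact sum_by_weight n (fun b => (-1:ℤ) ^ ((wt y + b).choose k))
  rw [Finset.sum_congr rfl (fun y _ => step2 y),
    sum_by_weight' j F (fun a => ∑ l ∈ Finset.range (n+1), (n.choose l : ℤ) * (-1:ℤ) ^ ((a + l).choose k))]
  simp_rw [Finset.sum_mul]
  rw [Finset.sum_comm]
  apply Finset.sum_congr rfl
  intro l _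
  apply Finset.sum_congr rfl
  intro m _
  rw [Nat.add_comm m l]
  ring
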